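/- Let G = YᵀY + δG with |δG| ≤ εn|Yᵀ||Y| entrywise (ε ≥ 0), and let w ∈ ℝᵐ. Then |wᵀGw - ‖Yw‖₂²| ≤ εn·Γ²·‖Yw‖₂², where Γ = ‖Y⁺‖₂‖|Y|‖₂ and Y ∈ ℝ^{n×m} has full column rank. -/

import Mathlib

open Matrix

/-- Euclidean 2-norm of a vector. -/
noncomputable def vnorm {n : ℕ} (x : Fin n → ℝ) : ℝ := Real.sqrt (∑ i, x i ^ 2)

/-- Spectral (ℓ²-operator) norm of a matrix. -/
noncomputable def specNorm {n r : ℕ} (Y : Matrix (Fin n) (Fin r) ℝ) : ℝ :=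
  ‖LinearMap.toContinuousLinearMap (Matrix.toEuclideanLin Y)‖

/-- Moore–Penrose pseudoinverse of a full-column-rank matrix. -/
noncomputable def pinv {n r : ℕ} (Y : Matrix (Fin n) (Fin r) ℝ) : Matrix (Fin r) (Fin n) ℝ :=
  (Yᵀ * Y)⁻¹ * Yᵀ

/-- Entrywise absolute value of a matrix. -/
def aent {n r : ℕ} (Y : Matrix (Fin n) (Fin r) ℝ) : Matrix (Fin n) (Fin r) ℝ :=
  Y.map (fun a => |a|)

lemma vnorm_nonneg {k : ℕ} (x : Fin k → ℝ) : 0 ≤ vnorm x := Real.sqrt_nonneg _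

lemma vnorm_sq {k : ℕ} (x : Fin k → ℝ) : vnorm x ^ 2 = ∑ i, x i ^ 2 := by
  have : (0:ℝ) ≤ ∑ i, x i ^ 2 := Finset.sum_nonneg fun i _ => sq_nonneg _
  simpa [vnorm] using Real.sq_sqrt this

lemma vnorm_abs {k : ℕ} (x : Fin k → ℝ) : vnorm (fun i => |x i|) = vnorm x := by
  simp [vnorm, sq_abs]

lemma vnorm_eq_norm {k : ℕ} (x : Fin k → ℝ) :
    vnorm x = ‖(WithLp.equiv 2 (Fin k → ℝ)).symm x‖ := by
  rw [EuclideanSpace.norm_eq]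
  simp [vnorm, Real.norm_eq_abs, sq_abs]

lemma vnorm_mulVec_le {a b : ℕ} (A : Matrix (Fin a) (Fin b) ℝ) (x : Fin b → ℝ) :
    vnorm (A.mulVec x) ≤ specNorm A * vnorm x := by
  rw [vnorm_eq_norm, vnorm_eq_norm]
  have h := (LinearMap.toContinuousLinearMap (Matrix.toEuclideanLin A)).le_opNorm
    ((WithLp.equiv 2 (Fin b → ℝ)).symm x)
  simpa [specNorm, Matrix.toEuclideanLin_apply_piLp_toLp, Matrix.toLin'_apply] using h

lemma quad_aux {a b : ℕ} (A : Matrix (Fin a) (Fin b) ℝ) (x : Fin b → ℝ) :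
    x ⬝ᵥ (Aᵀ * A).mulVec x = vnorm (A.mulVec x) ^ 2 := by
  rw [vnorm_sq, ← Matrix.mulVec_mulVec, Matrix.dotProduct_mulVec, Matrix.vecMul_transpose]
  simp [dotProduct, sq]

/-- Perturbed Gram matrix quadratic form: if `G = YᵀY + δG` with
`|δG| ≤ εn|Yᵀ||Y|` entrywise and `Y` has full column rank, then
`|wᵀGw - ‖Yw‖₂²| ≤ εn Γ² ‖Yw‖₂²` where `Γ = ‖Y⁺‖₂‖|Y|‖₂`. -/
theorem stmt_18 {n m : ℕ} (Y : Matrix (Fin n) (Fin m) ℝ) (hrank : Y.rank = m)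
    (ε : ℝ) (hε : 0 ≤ ε) (δG : Matrix (Fin m) (Fin m) ℝ)
    (hδG : ∀ i j, |δG i j| ≤ ε * n * (((aent Y)ᵀ * aent Y) i j))
    (G : Matrix (Fin m) (Fin m) ℝ) (hG : G = Yᵀ * Y + δG)
    (w : Fin m → ℝ) :
    |w ⬝ᵥ G.mulVec w - vnorm (Y.mulVec w) ^ 2|
      ≤ ε * n * (specNorm (pinv Y) * specNorm (aent Y)) ^ 2
          * vnorm (Y.mulVec w) ^ 2 := by
  subst hG
  set wa : Fin m → ℝ := fun i => |w i| with hwa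
  set B : Matrix (Fin m) (Fin m) ℝ := (aent Y)ᵀ * aent Y with hB
  -- reduce to the perturbation term
  have h1 : w ⬝ᵥ (Yᵀ * Y + δG).mulVec w - vnorm (Y.mulVec w) ^ 2
      = w ⬝ᵥ δG.mulVec w := by
    rw [Matrix.add_mulVec, dotProduct_add, quad_aux Y w]; ring
  rw [h1]
  -- entrywise bound
  have hBnn : ∀ i j, 0 ≤ B i j := by
    intro i j
    rw [hB, Matrix.mul_apply]
    exact Finset.sum_nonneg fun k _ => mul_nonneg (abs_nonneg _) (abs_nonneg _)
  have h2 : |w ⬝ᵥ δG.mulVec w| ≤ ε * n * (wa ⬝ᵥ B.mulVec wa) := by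
    have hL : w ⬝ᵥ δG.mulVec w = ∑ i, ∑ j, w i * (δG i j * w j) := by
      simp [dotProduct, Matrix.mulVec, Finset.mul_sum]
    have hR : ε * n * (wa ⬝ᵥ B.mulVec wa)
        = ∑ i, ∑ j, ε * n * (wa i * (B i j * wa j)) := by
      simp only [dotProduct, Matrix.mulVec, Finset.mul_sum]
    rw [hL, hR]
    calc |∑ i, ∑ j, w i * (δG i j * w j)|
        ≤ ∑ i, ∑ j, |w i * (δG i j * w j)| := by
          refine (Finset.abs_sum_le_sum_abs _ _).trans ?_
          exact Finset.sum_le_sum fun i _ => Finset.abs_sum_le_sum_abs _ _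
      _ ≤ ∑ i, ∑ j, ε * n * (wa i * (B i j * wa j)) := by
          refine Finset.sum_le_sum fun i _ => Finset.sum_le_sum fun j _ => ?_
          rw [abs_mul, abs_mul]
          have h := hδG i j
          have hwj : (0:ℝ) ≤ |w j| := abs_nonneg _
          have hwi : (0:ℝ) ≤ |w i| := abs_nonneg _
          have : |δG i j| * |w j| ≤ (ε * n * B i j) * |w j| :=
            mul_le_mul_of_nonneg_right h hwj
          calc |w i| * (|δG i j| * |w j|) ≤ |w i| * ((ε * n * B i j) * |w j|) :=
                mul_le_mul_of_nonneg_left this hwi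
            _ = ε * n * (wa i * (B i j * wa j)) := by rw [hwa]; ring
  -- pseudoinverse identity
  have hker : LinearMap.ker Y.mulVecLin = ⊥ := by
    have hrn := LinearMap.finrank_range_add_finrank_ker Y.mulVecLin
    rw [Module.finrank_fintype_fun_eq_card, Fintype.card_fin] at hrn
    have : Module.finrank ℝ (LinearMap.ker Y.mulVecLin) = 0 := by
      have : Y.rank = Module.finrank ℝ (LinearMap.range Y.mulVecLin) := rfl
      omega
    exact Submodule.finrank_eq_zero.mp this
  have hUnit : IsUnit (Yᵀ * Y) := by
    rw [← Matrix.mulVec_injective_iff_isUnit]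
    have : LinearMap.ker (Yᵀ * Y).mulVecLin = ⊥ := by
      rw [Matrix.ker_mulVecLin_transpose_mul_self, hker]
    exact LinearMap.ker_eq_bot.mp this
  have hid : (pinv Y).mulVec (Y.mulVec w) = w := by
    rw [Matrix.mulVec_mulVec, pinv, Matrix.mul_assoc,
      Matrix.nonsing_inv_mul _ (Matrix.isUnit_iff_isUnit_det _ |>.mp hUnit),
      Matrix.one_mulVec]
  -- norm bounds
  have h3 : wa ⬝ᵥ B.mulVec wa = vnorm ((aent Y).mulVec wa) ^ 2 := quad_aux _ _
  have h4 : vnorm ((aent Y).mulVec wa)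
      ≤ specNorm (aent Y) * (specNorm (pinv Y) * vnorm (Y.mulVec w)) := by
    have s1 : vnorm ((aent Y).mulVec wa) ≤ specNorm (aent Y) * vnorm wa :=
      vnorm_mulVec_le _ _
    have s2 : vnorm wa = vnorm w := vnorm_abs w
    have s3 : vnorm w ≤ specNorm (pinv Y) * vnorm (Y.mulVec w) := by
      conv_lhs => rw [← hid]
      exact vnorm_mulVec_le _ _
    calc vnorm ((aent Y).mulVec wa) ≤ specNorm (aent Y) * vnorm wa := s1
      _ = specNorm (aent Y) * vnorm w := by rw [s2]
      _ ≤ specNorm (aent Y) * (specNorm (pinv Y) * vnorm (Y.mulVec w)) :=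
          mul_le_mul_of_nonneg_left s3 (norm_nonneg _)
  have h5 : vnorm ((aent Y).mulVec wa) ^ 2
      ≤ (specNorm (pinv Y) * specNorm (aent Y)) ^ 2 * vnorm (Y.mulVec w) ^ 2 := by
    have := pow_le_pow_left₀ (vnorm_nonneg _) h4 2
    calc vnorm ((aent Y).mulVec wa) ^ 2
        ≤ (specNorm (aent Y) * (specNorm (pinv Y) * vnorm (Y.mulVec w))) ^ 2 := this
      _ = (specNorm (pinv Y) * specNorm (aent Y)) ^ 2 * vnorm (Y.mulVec w) ^ 2 := by ring
  calc |w ⬝ᵥ δG.mulVec w| ≤ ε * n * (wa ⬝ᵥ B.mulVec wa) := h2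
    _ = ε * n * vnorm ((aent Y).mulVec wa) ^ 2 := by rw [h3]
    _ ≤ ε * n * ((specNorm (pinv Y) * specNorm (aent Y)) ^ 2 * vnorm (Y.mulVec w) ^ 2) := by
        exact mul_le_mul_of_nonneg_left h5 (by positivity)
    _ = ε * n * (specNorm (pinv Y) * specNorm (aent Y)) ^ 2 * vnorm (Y.mulVec w) ^ 2 := by
        ring
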